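/- Let h, w, κ, τ, n, R be positive integers. Let V consist of w columns S₁,…,S_w, each a tuple of κ·h vertices with R-multilinear labels in [n]. Sample a pair (E, H) as follows: for each i independently, choose a uniformly random perfect matching between S_i and S_{i+1} (indices mod w), giving the simple-edge configuration E; then, independently for each i, partition the κ·h edges of the i-th matching uniformly at random into h groups of κ edges and merge each group into an order-2κ hyperedge, giving H, where the label of a hyperedge records the multiset of labels of its κ endpoints in S_i and the multiset of labels of its κ endpoints in S_{i+1} (so hyperedges on the same vertex labels but with a different split between S_i and S_{i+1} count as distinct). Let A be the event that every labeled hyperedge of (V,H) occurs with even multiplicity and exactly τ distinct labeled hyperedges occur, and let B be the event that every labeled simple edge of (V,E) occurs with even multiplicity and at most κ·τ distinct labeled simple edges occur. If Pr[A] > 0, then Pr[B | A] ≥ (1/κ!)^{wh}. -/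

import Mathlib

open Finset

/-- The cyclic successor of `i` in `Fin w`. -/
def succW {w : ℕ} (i : Fin w) : Fin w := ⟨((i : ℕ) + 1) % w, Nat.mod_lt _ i.pos⟩

/-- A tuple is `R`-multilinear if no element of `[n]` occurs more than `R` times among
its coordinates. -/
def isMultilinearN {n R : ℕ} {ι : Type*} [Fintype ι] [DecidableEq ι]
    (I : ι → Fin n) : Prop :=
  ∀ a : Fin n, (Finset.univ.filter (fun t => I t = a)).card ≤ R

/-- An (ordered) grouping of the `κ·h` matching edges of a column into `h` groups of `κ`
edges each. -/
abbrev Grouping (κ h : ℕ) :=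
  {g : Fin (κ * h) → Fin h // ∀ j, (Finset.univ.filter (fun t => g t = j)).card = κ}

/-- Sample space for the two-step sampling: independently for each column, a uniformly
random perfect matching (a bijection between consecutive columns) together with a uniformly
random grouping of its edges into groups of size `κ`. -/
abbrev SampleSpace (w κ h : ℕ) :=
  (Fin w → Equiv.Perm (Fin (κ * h))) × (Fin w → Grouping κ h)

/-- The label of the order-`2κ` hyperedge obtained from group `j` of column `i`. -/
def hypLabel {n κ h w : ℕ} (S : Fin w → Fin (κ * h) → Fin n)
    (ω : SampleSpace w κ h) (p : Fin w × Fin h) : Multiset (Fin n) × Multiset (Fin n) :=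
  ((Finset.univ.filter (fun t => (ω.2 p.1).1 t = p.2)).val.map (S p.1),
   (Finset.univ.filter (fun t => (ω.2 p.1).1 t = p.2)).val.map
      (fun t => S (succW p.1) (ω.1 p.1 t)))

/-- The labeled simple edge through position `t` of column `i`. -/
def simpleLabel {n κ h w : ℕ} (S : Fin w → Fin (κ * h) → Fin n)
    (ω : SampleSpace w κ h) (p : Fin w × Fin (κ * h)) : Sym2 (Fin n) :=
  Sym2.mk (S p.1 p.2) (S (succW p.1) (ω.1 p.1 p.2))

-- `A`: the sampled hypergraph is even with exactly `τ` distinct labeled hyperedges.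
open Classical in
noncomputable def eventA {n κ h w : ℕ} (S : Fin w → Fin (κ * h) → Fin n) (τ : ℕ) :
    Finset (SampleSpace w κ h) :=
  Finset.univ.filter (fun ω =>
    (∀ ℓ : Multiset (Fin n) × Multiset (Fin n),
      Even (((Finset.univ : Finset (Fin w × Fin h)).filter
        (fun p => hypLabel S ω p = ℓ)).card)) ∧
    ((Finset.univ : Finset (Fin w × Fin h)).image (hypLabel S ω)).card = τ)

-- `B`: the sampled simple-edge configuration is even with at most `κ·τ` distinct labeled
-- simple edges.
open Classical in
noncomputable def eventB {n κ h w : ℕ} (S : Fin w → Fin (κ * h) → Fin n) (κτ : ℕ) :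
    Finset (SampleSpace w κ h) :=
  Finset.univ.filter (fun ω =>
    (∀ e : Sym2 (Fin n),
      Even (((Finset.univ : Finset (Fin w × Fin (κ * h))).filter
        (fun p => simpleLabel S ω p = e)).card)) ∧
    ((Finset.univ : Finset (Fin w × Fin (κ * h))).image (simpleLabel S ω)).card ≤ κτ)

open Finset

section CanonAux

variable {α : Type*} [LinearOrder α] {n κ : ℕ}

/-- Embed `α` into `Lex (Fin n × α)` by pairing each element with its label. -/
def labEmb (f : α → Fin n) : α ↪ Lex (Fin n × α) :=
  ⟨fun t => toLex (f t, t), fun a b hab => congrArg (fun x => (ofLex x).2) hab⟩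

noncomputable def canonIso (f : α → Fin n) (T : Finset α) (hT : T.card = κ) :
    Fin κ ≃o {x // x ∈ T.map (labEmb f)} :=
  (T.map (labEmb f)).orderIsoOfFin (by rw [Finset.card_map, hT])

noncomputable def canonEquiv (f : α → Fin n) (T : Finset α) (hT : T.card = κ) :
    Fin κ ≃ {x // x ∈ T} :=
  (canonIso f T hT).toEquiv.trans
    { toFun := fun x => ⟨(ofLex x.1).2, by
        obtain ⟨t, ht, hte⟩ := Finset.mem_map.mp x.2
        rw [← hte]; exact ht⟩
      invFun := fun t => ⟨labEmb f t.1, Finset.mem_map_of_mem _ t.2⟩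
      left_inv := fun x => by
        obtain ⟨t, ht, hte⟩ := Finset.mem_map.mp x.2
        apply Subtype.ext
        show labEmb f (ofLex (x : Lex (Fin n × α))).2 = (x : Lex (Fin n × α))
        rw [← hte]; rfl
      right_inv := fun t => rfl }

noncomputable def canonElt (f : α → Fin n) (T : Finset α) (hT : T.card = κ) (k : Fin κ) : α :=
  (canonEquiv f T hT k : α)

lemma canonElt_mem (f : α → Fin n) (T : Finset α) (hT : T.card = κ) (k : Fin κ) :
    canonElt f T hT k ∈ T := (canonEquiv f T hT k).2

lemma labEmb_canonElt (f : α → Fin n) (T : Finset α) (hT : T.card = κ) (k : Fin κ) :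
    labEmb f (canonElt f T hT k) = (canonIso f T hT k : Lex (Fin n × α)) := by
  obtain ⟨t, ht, hte⟩ := Finset.mem_map.mp (canonIso f T hT k).2
  show labEmb f (ofLex (canonIso f T hT k : Lex (Fin n × α))).2 = _
  rw [← hte]; rfl

lemma canonElt_injective (f : α → Fin n) (T : Finset α) (hT : T.card = κ) :
    Function.Injective (canonElt f T hT) := fun k k' hkk' =>
  (canonEquiv f T hT).injective (Subtype.ext hkk')

lemma f_canonElt (f : α → Fin n) (T : Finset α) (hT : T.card = κ) (k : Fin κ) :
    f (canonElt f T hT k) = (ofLex (canonIso f T hT k : Lex (Fin n × α))).1 := by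
  rw [← labEmb_canonElt f T hT k]; rfl

lemma f_canonElt_monotone (f : α → Fin n) (T : Finset α) (hT : T.card = κ) :
    Monotone (fun k => f (canonElt f T hT k)) := by
  intro k k' hkk'
  simp only [f_canonElt]
  have h1 : (canonIso f T hT k : Lex (Fin n × α)) ≤ (canonIso f T hT k' : Lex (Fin n × α)) := by
    exact_mod_cast (canonIso f T hT).monotone hkk'
  rcases (Prod.Lex.le_iff).mp h1 with h2 | h2
  · exact le_of_lt h2
  · exact le_of_eq h2.1

lemma univ_val_map_canonElt (f : α → Fin n) (T : Finset α) (hT : T.card = κ) :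
    (Finset.univ.val.map (canonElt f T hT)) = T.val := by
  classical
  have himg : Finset.univ.image (canonElt f T hT) = T := by
    apply Finset.eq_of_subset_of_card_le
    · intro x hx
      obtain ⟨k, _, rfl⟩ := Finset.mem_image.mp hx
      exact canonElt_mem f T hT k
    · rw [Finset.card_image_of_injective _ (canonElt_injective f T hT), hT,
        Finset.card_univ, Fintype.card_fin]
  rw [← Finset.image_val_of_injOn ((canonElt_injective f T hT).injOn), himg]

lemma ofFn_f_canonElt (f : α → Fin n) (T : Finset α) (hT : T.card = κ) :
    List.ofFn (fun k => f (canonElt f T hT k)) = (T.val.map f).sort (· ≤ ·) := by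
  apply fun hp h1 h2 => List.Perm.eq_of_pairwise' (r := fun a b : Fin n => a ≤ b) h1 h2 hp
  · rw [← Multiset.coe_eq_coe, Multiset.sort_eq, ← Fin.univ_val_map,
      ← univ_val_map_canonElt f T hT, Multiset.map_map]
    rfl
  · rw [List.pairwise_ofFn]
    intro k k' hkk'
    exact f_canonElt_monotone f T hT (le_of_lt hkk')
  · exact Multiset.pairwise_sort _ _

lemma f_canonElt_eq_getD (f : α → Fin n) (T : Finset α) (hT : T.card = κ) (k : Fin κ)
    (d : Fin n) : f (canonElt f T hT k) = ((T.val.map f).sort (· ≤ ·)).getD k d := by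
  rw [← ofFn_f_canonElt f T hT]
  have hk : (k : ℕ) < (List.ofFn (fun k => f (canonElt f T hT k))).length := by
    simp [k.2]
  rw [List.getD_eq_getElem _ _ hk, List.getElem_ofFn]

lemma canonElt_congr (f : α → Fin n) {T T' : Finset α} (hTT : T = T') (hT : T.card = κ)
    (hT' : T'.card = κ) (k : Fin κ) : canonElt f T hT k = canonElt f T' hT' k := by
  subst hTT; rfl

lemma canonEquiv_symm_congr (f : α → Fin n) {T T' : Finset α} (hTT : T = T')
    (hT : T.card = κ) (hT' : T'.card = κ) (x : α) (hx : x ∈ T) (hx' : x ∈ T') :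
    (canonEquiv f T hT).symm ⟨x, hx⟩ = (canonEquiv f T' hT').symm ⟨x, hx'⟩ := by
  subst hTT; rfl

end CanonAux

section MainAux

open Finset

variable {n κ h w : ℕ} (S : Fin w → Fin (κ * h) → Fin n)

def grpT (ω : SampleSpace w κ h) (i : Fin w) (j : Fin h) : Finset (Fin (κ * h)) :=
  Finset.univ.filter (fun t => (ω.2 i).1 t = j)

lemma grpT_card (ω : SampleSpace w κ h) (i : Fin w) (j : Fin h) : (grpT ω i j).card = κ :=
  (ω.2 i).2 j

lemma mem_grpT_iff {ω : SampleSpace w κ h} {i : Fin w} {j : Fin h} {t : Fin (κ * h)} :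
    t ∈ grpT ω i j ↔ (ω.2 i).1 t = j := by simp [grpT]

def grpR (ω : SampleSpace w κ h) (i : Fin w) (j : Fin h) : Finset (Fin (κ * h)) :=
  (grpT ω i j).image (ω.1 i)

lemma grpR_card (ω : SampleSpace w κ h) (i : Fin w) (j : Fin h) : (grpR ω i j).card = κ := by
  rw [grpR, Finset.card_image_of_injective _ (ω.1 i).injective, grpT_card]

lemma mem_grpR_iff {ω : SampleSpace w κ h} {i : Fin w} {j : Fin h} {x : Fin (κ * h)} :
    x ∈ grpR ω i j ↔ (ω.2 i).1 ((ω.1 i).symm x) = j := by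
  simp only [grpR, Finset.mem_image]
  constructor
  · rintro ⟨t, ht, rfl⟩
    rw [Equiv.symm_apply_apply]
    exact mem_grpT_iff.mp ht
  · intro hx
    exact ⟨(ω.1 i).symm x, mem_grpT_iff.mpr hx, (ω.1 i).apply_symm_apply x⟩

noncomputable def uL (ω : SampleSpace w κ h) (i : Fin w) : Fin h × Fin κ → Fin (κ * h) :=
  fun jk => canonElt (S i) (grpT ω i jk.1) (grpT_card ω i jk.1) jk.2

noncomputable def uR (ω : SampleSpace w κ h) (i : Fin w) : Fin h × Fin κ → Fin (κ * h) :=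
  fun jk => canonElt (S (succW i)) (grpR ω i jk.1) (grpR_card ω i jk.1) jk.2

lemma uL_mem (ω : SampleSpace w κ h) (i : Fin w) (jk : Fin h × Fin κ) :
    uL S ω i jk ∈ grpT ω i jk.1 := canonElt_mem _ _ _ _

lemma grp_uL (ω : SampleSpace w κ h) (i : Fin w) (jk : Fin h × Fin κ) :
    (ω.2 i).1 (uL S ω i jk) = jk.1 := mem_grpT_iff.mp (uL_mem S ω i jk)

lemma uR_mem (ω : SampleSpace w κ h) (i : Fin w) (jk : Fin h × Fin κ) :
    uR S ω i jk ∈ grpR ω i jk.1 := canonElt_mem _ _ _ _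

lemma uL_bij (ω : SampleSpace w κ h) (i : Fin w) : Function.Bijective (uL S ω i) := by
  rw [Fintype.bijective_iff_injective_and_card]
  refine ⟨?_, by simp [mul_comm]⟩
  rintro ⟨j, k⟩ ⟨j', k'⟩ hjk
  have hj : j = j' := by
    have e1 := grp_uL S ω i (j, k)
    have e2 := grp_uL S ω i (j', k')
    rw [hjk] at e1
    exact e1.symm.trans e2
  subst hj
  have hk : k = k' := canonElt_injective _ _ _ hjk
  rw [hk]

lemma uR_bij (ω : SampleSpace w κ h) (i : Fin w) : Function.Bijective (uR S ω i) := by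
  rw [Fintype.bijective_iff_injective_and_card]
  refine ⟨?_, by simp [mul_comm]⟩
  rintro ⟨j, k⟩ ⟨j', k'⟩ hjk
  have hj : j = j' := by
    have h1 := mem_grpR_iff.mp (uR_mem S ω i (j, k))
    have h2 := mem_grpR_iff.mp (uR_mem S ω i (j', k'))
    rw [hjk] at h1
    exact h1.symm.trans h2
  subst hj
  have hk : k = k' := canonElt_injective _ _ _ hjk
  rw [hk]

noncomputable def eLq (ω : SampleSpace w κ h) (i : Fin w) : (Fin h × Fin κ) ≃ Fin (κ * h) :=
  Equiv.ofBijective _ (uL_bij S ω i)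

noncomputable def eRq (ω : SampleSpace w κ h) (i : Fin w) : (Fin h × Fin κ) ≃ Fin (κ * h) :=
  Equiv.ofBijective _ (uR_bij S ω i)

noncomputable def canonize (ω : SampleSpace w κ h) : SampleSpace w κ h :=
  (fun i => (eLq S ω i).symm.trans (eRq S ω i), ω.2)

lemma canonize_snd (ω : SampleSpace w κ h) : (canonize S ω).2 = ω.2 := rfl

lemma canonize_fst_apply (ω : SampleSpace w κ h) (i : Fin w) (t : Fin (κ * h)) :
    (canonize S ω).1 i t = uR S ω i ((eLq S ω i).symm t) := rfl

lemma grp_eLq_symm (ω : SampleSpace w κ h) (i : Fin w) (t : Fin (κ * h)) :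
    (ω.2 i).1 t = ((eLq S ω i).symm t).1 := by
  conv_lhs => rw [← (eLq S ω i).apply_symm_apply t]
  exact grp_uL S ω i _

lemma hypLabel_eq (ω : SampleSpace w κ h) (i : Fin w) (j : Fin h) :
    hypLabel S ω (i, j) =
      ((grpT ω i j).val.map (S i), (grpR ω i j).val.map (S (succW i))) := by
  unfold hypLabel grpT grpR
  refine Prod.ext rfl ?_
  show _ = ((Finset.univ.filter (fun t => (ω.2 i).1 t = j)).image (ω.1 i)).val.map _
  rw [Finset.image_val_of_injOn ((ω.1 i).injective.injOn), Multiset.map_map]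
  rfl

end MainAux

section MainAux2

open Finset

variable {n κ h w : ℕ} (S : Fin w → Fin (κ * h) → Fin n)

lemma canonize_image (ω : SampleSpace w κ h) (i : Fin w) (j : Fin h) :
    (grpT ω i j).image ((canonize S ω).1 i) = grpR ω i j := by
  apply Finset.eq_of_subset_of_card_le
  · intro x hx
    obtain ⟨t, ht, rfl⟩ := Finset.mem_image.mp hx
    rw [canonize_fst_apply]
    have hj : ((eLq S ω i).symm t).1 = j := by
      rw [← grp_eLq_symm]; exact mem_grpT_iff.mp ht
    rw [← hj]
    exact uR_mem S ω i _
  · rw [grpR_card, Finset.card_image_of_injective _ ((canonize S ω).1 i).injective,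
      grpT_card]

lemma grpT_canonize (ω : SampleSpace w κ h) (i : Fin w) (j : Fin h) :
    grpT (canonize S ω) i j = grpT ω i j := rfl

lemma grpR_canonize (ω : SampleSpace w κ h) (i : Fin w) (j : Fin h) :
    grpR (canonize S ω) i j = grpR ω i j := by
  rw [grpR, grpT_canonize, canonize_image]

lemma hypLabel_canonize (ω : SampleSpace w κ h) (p : Fin w × Fin h) :
    hypLabel S (canonize S ω) p = hypLabel S ω p := by
  obtain ⟨i, j⟩ := p
  rw [hypLabel_eq, hypLabel_eq, grpT_canonize, grpR_canonize]

/-- the `k`-th smallest element of a multiset of labels -/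
def msGet {n : ℕ} (m : Multiset (Fin n)) (d : Fin n) (k : ℕ) : Fin n :=
  (m.sort (· ≤ ·)).getD k d

/-- the canonical `k`-th simple edge label realizing a hyperedge label `ℓ` -/
def Gfun {n : ℕ} (d : Fin n) (ℓ : Multiset (Fin n) × Multiset (Fin n)) (k : ℕ) :
    Sym2 (Fin n) :=
  Sym2.mk (msGet ℓ.1 d k) (msGet ℓ.2 d k)

lemma simpleLabel_canonize_uL (d : Fin n) (ω : SampleSpace w κ h) (i : Fin w)
    (jk : Fin h × Fin κ) :
    simpleLabel S (canonize S ω) (i, eLq S ω i jk) =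
      Gfun d (hypLabel S ω (i, jk.1)) jk.2 := by
  obtain ⟨j, k⟩ := jk
  have ht : eLq S ω i (j, k) = uL S ω i (j, k) := rfl
  have h1 : S i (eLq S ω i (j, k)) = msGet ((grpT ω i j).val.map (S i)) d k := by
    rw [ht]
    exact f_canonElt_eq_getD (S i) (grpT ω i j) (grpT_card ω i j) k d
  have h2 : S (succW i) ((canonize S ω).1 i (eLq S ω i (j, k))) =
      msGet ((grpR ω i j).val.map (S (succW i))) d k := by
    rw [canonize_fst_apply, Equiv.symm_apply_apply]
    exact f_canonElt_eq_getD (S (succW i)) (grpR ω i j) (grpR_card ω i j) k d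
  rw [simpleLabel, Gfun, hypLabel_eq]
  exact congrArg₂ Sym2.mk h1 h2

lemma simpleLabel_canonize_mem (d : Fin n) (ω : SampleSpace w κ h) (i : Fin w)
    (t : Fin (κ * h)) :
    simpleLabel S (canonize S ω) (i, t) =
      Gfun d (hypLabel S ω (i, (ω.2 i).1 t)) (((eLq S ω i).symm t).2) := by
  conv_lhs => rw [← (eLq S ω i).apply_symm_apply t]
  rw [simpleLabel_canonize_uL S d ω i _, grp_eLq_symm S ω i t]

end MainAux2

section MainAux3

open Finset

variable {n κ h w : ℕ} (S : Fin w → Fin (κ * h) → Fin n)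

lemma canonize_mem_eventA {τ : ℕ} {ω : SampleSpace w κ h} (hω : ω ∈ eventA S τ) :
    canonize S ω ∈ eventA S τ := by
  classical
  have hfun : hypLabel S (canonize S ω) = hypLabel S ω := funext (hypLabel_canonize S ω)
  rw [eventA, Finset.mem_filter] at hω ⊢
  rw [hfun]
  exact ⟨Finset.mem_univ _, hω.2⟩

lemma key_count (d : Fin n) (ω : SampleSpace w κ h) (e : Sym2 (Fin n))
    [DecidablePred (fun p : Fin w × Fin (κ * h) => simpleLabel S (canonize S ω) p = e)]
    [∀ q : Fin w × Fin h, DecidablePred (fun k : Fin κ => Gfun d (hypLabel S ω q) (k : ℕ) = e)] :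
    ((Finset.univ : Finset (Fin w × Fin (κ * h))).filter
        (fun p => simpleLabel S (canonize S ω) p = e)).card
    = ∑ q : Fin w × Fin h,
        ((Finset.univ : Finset (Fin κ)).filter
          (fun (k : Fin κ) => Gfun d (hypLabel S ω q) (k : ℕ) = e)).card := by
  rw [Finset.card_filter, Fintype.sum_prod_type, Fintype.sum_prod_type]
  refine Finset.sum_congr rfl fun i _ => ?_
  rw [← Equiv.sum_comp (eLq S ω i)
      (fun t => if simpleLabel S (canonize S ω) (i, t) = e then 1 else 0),
    Fintype.sum_prod_type]
  refine Finset.sum_congr rfl fun j _ => ?_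
  rw [Finset.card_filter]
  refine Finset.sum_congr rfl fun k _ => ?_
  exact if_congr (by rw [simpleLabel_canonize_uL S d ω i (j, k)]) rfl rfl

lemma canonize_mem_eventB {τ : ℕ} (d : Fin n) {ω : SampleSpace w κ h}
    (hω : ω ∈ eventA S τ) : canonize S ω ∈ eventB S (κ * τ) := by
  classical
  rw [eventA, Finset.mem_filter] at hω
  obtain ⟨-, hev, hcard⟩ := hω
  rw [eventB, Finset.mem_filter]
  refine ⟨Finset.mem_univ _, ?_, ?_⟩
  · intro e
    rw [key_count S d ω e]
    rw [Finset.sum_comp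
      (fun ℓ => ((Finset.univ : Finset (Fin κ)).filter
        (fun (k : Fin κ) => Gfun d ℓ (k : ℕ) = e)).card) (hypLabel S ω)]
    rw [even_iff_two_dvd]
    refine Finset.dvd_sum fun ℓ _ => ?_
    rw [smul_eq_mul]
    exact Dvd.dvd.mul_right (even_iff_two_dvd.mp (hev ℓ)) _
  · have hsub : (Finset.univ : Finset (Fin w × Fin (κ * h))).image
        (simpleLabel S (canonize S ω)) ⊆
        (((Finset.univ : Finset (Fin w × Fin h)).image (hypLabel S ω)) ×ˢ
          (Finset.univ : Finset (Fin κ))).image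
            (fun q : (Multiset (Fin n) × Multiset (Fin n)) × Fin κ =>
              Gfun d q.1 (q.2 : ℕ)) := by
      intro x hx
      obtain ⟨p, -, rfl⟩ := Finset.mem_image.mp hx
      obtain ⟨i, t⟩ := p
      rw [simpleLabel_canonize_mem S d ω i t]
      refine Finset.mem_image.mpr
        ⟨(hypLabel S ω (i, (ω.2 i).1 t), ((eLq S ω i).symm t).2), ?_, rfl⟩
      exact Finset.mem_product.mpr
        ⟨Finset.mem_image_of_mem _ (Finset.mem_univ _), Finset.mem_univ _⟩
    calc ((Finset.univ : Finset (Fin w × Fin (κ * h))).image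
            (simpleLabel S (canonize S ω))).card
        ≤ _ := Finset.card_le_card hsub
      _ ≤ _ := Finset.card_image_le
      _ = κ * τ := by
          rw [Finset.card_product, hcard, Finset.card_univ, Fintype.card_fin, mul_comm]

end MainAux3

section MainAux4

open Finset

variable {n κ h w : ℕ} (S : Fin w → Fin (κ * h) → Fin n)

lemma canonEquiv_symm_val_inj {α : Type*} [LinearOrder α] {n κ : ℕ} (f : α → Fin n)
    {T T' : Finset α} (hTT : T = T') (hT : T.card = κ) (hT' : T'.card = κ) {x y : α}
    (hx : x ∈ T) (hy : y ∈ T')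
    (heq : (canonEquiv f T hT).symm ⟨x, hx⟩ = (canonEquiv f T' hT').symm ⟨y, hy⟩) :
    x = y := by
  subst hTT
  have h2 := congrArg (fun z => ((canonEquiv f T hT) z : α)) heq
  simpa using h2

noncomputable def Jmap (ω : SampleSpace w κ h) (i : Fin w) (j : Fin h) (k : Fin κ) : Fin κ :=
  (canonEquiv (S (succW i)) (grpR ω i j) (grpR_card ω i j)).symm
    ⟨ω.1 i (canonElt (S i) (grpT ω i j) (grpT_card ω i j) k),
      Finset.mem_image_of_mem _ (canonElt_mem _ _ _ _)⟩

lemma Jmap_injective (ω : SampleSpace w κ h) (i : Fin w) (j : Fin h) :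
    Function.Injective (Jmap S ω i j) := by
  intro k k' hkk
  unfold Jmap at hkk
  have h1 := congrArg
    (fun z => ((canonEquiv (S (succW i)) (grpR ω i j) (grpR_card ω i j)) z : Fin (κ * h)))
    hkk
  simp only [Equiv.apply_symm_apply] at h1
  exact canonElt_injective _ _ _ ((ω.1 i).injective h1)

noncomputable def JmapE (ω : SampleSpace w κ h) : Fin w → Fin h → (Fin κ ↪ Fin κ) :=
  fun i j => ⟨Jmap S ω i j, Jmap_injective S ω i j⟩

lemma canonize_fiber_inj {x ω ω' : SampleSpace w κ h}
    (hω : canonize S ω = x) (hω' : canonize S ω' = x) (hJ : JmapE S ω = JmapE S ω') :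
    ω = ω' := by
  obtain ⟨σ, g⟩ := ω
  obtain ⟨σ', g'⟩ := ω'
  have hg : g = g' := by
    have h1 : g = x.2 := congrArg Prod.snd hω
    have h2 : g' = x.2 := congrArg Prod.snd hω'
    rw [h1, h2]
  subst hg
  suffices hσ : σ = σ' by rw [hσ]
  funext i
  apply Equiv.ext
  intro t
  set j := (g i).1 t with hj
  have htmem : t ∈ grpT (σ, g) i j := mem_grpT_iff.mpr rfl
  obtain ⟨k, hk⟩ : ∃ k, canonElt (S i) (grpT (σ, g) i j) (grpT_card (σ, g) i j) k = t := by
    obtain ⟨y, hy⟩ :=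
      (canonEquiv (S i) (grpT (σ, g) i j) (grpT_card (σ, g) i j)).surjective ⟨t, htmem⟩
    exact ⟨y, congrArg Subtype.val hy⟩
  rw [← hk]
  have hR : grpR (σ, g) i j = grpR (σ', g) i j := by
    have hx1 : (canonize S (σ, g)).1 = x.1 := congrArg Prod.fst hω
    have hx1' : (canonize S (σ', g)).1 = x.1 := congrArg Prod.fst hω'
    have e1 := canonize_image S (σ, g) i j
    have e2 := canonize_image S (σ', g) i j
    rw [hx1] at e1
    rw [hx1'] at e2
    exact e1.symm.trans e2
  have hJk : Jmap S (σ, g) i j k = Jmap S (σ', g) i j k :=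
    congrFun (congrArg (fun F : Fin w → Fin h → (Fin κ ↪ Fin κ) => (F i j : Fin κ → Fin κ))
      hJ) k
  unfold Jmap at hJk
  exact canonEquiv_symm_val_inj (S (succW i)) hR _ _ _ _ hJk

lemma fiber_card_le {τ : ℕ} (x : SampleSpace w κ h) :
    ((eventA S τ).filter (fun ω => canonize S ω = x)).card ≤ (Nat.factorial κ) ^ (w * h) := by
  classical
  have hinj : Set.InjOn (JmapE S)
      ((eventA S τ).filter (fun ω => canonize S ω = x)) := by
    intro ω hω ω' hω' hJ
    simp only [Finset.coe_filter, Set.mem_setOf_eq] at hω hω'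
    exact canonize_fiber_inj S hω.2 hω'.2 hJ
  calc ((eventA S τ).filter (fun ω => canonize S ω = x)).card
      ≤ (Finset.univ : Finset (Fin w → Fin h → (Fin κ ↪ Fin κ))).card :=
        Finset.card_le_card_of_injOn (JmapE S) (fun a _ => Finset.mem_univ _) hinj
    _ = (Nat.factorial κ) ^ (w * h) := by
        rw [Finset.card_univ, Fintype.card_fun, Fintype.card_fun,
          Fintype.card_embedding_eq, Nat.descFactorial_self]
        simp only [Fintype.card_fin]
        rw [← pow_mul, mul_comm h w]

end MainAux4

/-- If the hypergraph sampled from a uniformly random matching-plus-grouping configuration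
is even with exactly `τ` distinct labeled hyperedges with positive probability, then
conditioned on that event, with probability at least `(1/κ!)^{wh}` the underlying
simple-edge configuration is even with at most `κ·τ` distinct labeled simple edges. -/
theorem simple_even_given_hyper_even
    (h w κ n τ R : ℕ) (hh : 0 < h) (hw : 0 < w) (hκ : 0 < κ) (hn : 0 < n)
    (hτ : 0 < τ) (hR : 0 < R)
    (S : Fin w → Fin (κ * h) → Fin n)
    (hmult : ∀ i, isMultilinearN (R := R) (S i))
    (hA : (eventA S τ (κ := κ) (h := h) (w := w)).Nonempty) :
    ((1 : ℝ) / (Nat.factorial κ)) ^ (w * h) ≤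
      (((eventA S τ ∩ eventB S (κ * τ)).card : ℝ) / ((eventA S τ).card : ℝ)) := by
  classical
  set d : Fin n := ⟨0, hn⟩
  have hAB : (eventA S τ).card ≤
      (Nat.factorial κ) ^ (w * h) * (eventA S τ ∩ eventB S (κ * τ)).card := by
    calc (eventA S τ).card
        ≤ (Nat.factorial κ) ^ (w * h) * ((eventA S τ).image (canonize S)).card :=
          Finset.card_le_mul_card_image _ _ (fun b _ => by
            simpa using fiber_card_le S (τ := τ) b)
      _ ≤ (Nat.factorial κ) ^ (w * h) * (eventA S τ ∩ eventB S (κ * τ)).card := by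
          apply Nat.mul_le_mul_left
          apply Finset.card_le_card
          intro x hx
          obtain ⟨ω, hω, rfl⟩ := Finset.mem_image.mp hx
          exact Finset.mem_inter.mpr
            ⟨canonize_mem_eventA S hω, canonize_mem_eventB S d hω⟩
  have hApos : (0 : ℝ) < ((eventA S τ).card : ℝ) := by
    exact_mod_cast Finset.card_pos.mpr hA
  have hK : (0 : ℝ) < ((Nat.factorial κ : ℝ)) ^ (w * h) := by positivity
  rw [div_pow, one_pow, div_le_div_iff₀ hK hApos, one_mul]
  calc ((eventA S τ).card : ℝ)
      ≤ ((Nat.factorial κ) ^ (w * h) * (eventA S τ ∩ eventB S (κ * τ)).card : ℕ) := by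
        exact_mod_cast hAB
    _ = ((eventA S τ ∩ eventB S (κ * τ)).card : ℝ) * ((Nat.factorial κ : ℝ)) ^ (w * h) := by
        push_cast
        ring
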